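/- If κ : [0,∞) → ℝ satisfies that |κ| is decreasing and r ↦ r^{d-1} κ(r) is integrable on (0,∞), then for any h₀ > 0, λ > 0 and integer m ≥ 1, the sum of |κ(h₀‖k‖₂/λ)| over all lattice points k ∈ ℤ^d with ‖k‖_∞ ≥ m is at most (3^d − 1)·2^{d−1}·(λ/h₀)^d times the integral from (m−1)h₀/λ to ∞ of r^{d−1}|κ(r)| dr. -/

import Mathlib

open MeasureTheory

lemma stmt3_lemA (d : ℕ) (hd : 1 ≤ d) (a : ℝ) (ha : 1 ≤ a) :
    2 * d * a ^ (d - 1) ≤ (a + 1) ^ d - (a - 1) ^ d := by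
  have key : (a + 1) ^ d - (a - 1) ^ d
      = ∑ k ∈ Finset.range (d+1), a ^ k * (1 - (-1:ℝ) ^ (d - k)) * (d.choose k) := by
    rw [sub_eq_add_neg a, add_pow, add_pow, ← Finset.sum_sub_distrib]
    apply Finset.sum_congr rfl
    intro k _
    ring
  rw [key]
  have hmem : d - 1 ∈ Finset.range (d+1) := Finset.mem_range.mpr (by omega)
  have hterm : a ^ (d-1) * (1 - (-1:ℝ) ^ (d - (d-1))) * (d.choose (d-1)) = 2 * d * a ^ (d-1) := by
    have h1 : d - (d - 1) = 1 := by omega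
    have h2 : d.choose (d-1) = d := by
      rw [← Nat.choose_symm (by omega : d - 1 ≤ d), h1, Nat.choose_one_right]
    rw [h1, h2]
    ring
  calc 2 * (d:ℝ) * a ^ (d-1)
      = a ^ (d-1) * (1 - (-1:ℝ) ^ (d - (d-1))) * (d.choose (d-1)) := hterm.symm
    _ ≤ ∑ k ∈ Finset.range (d+1), a ^ k * (1 - (-1:ℝ) ^ (d - k)) * (d.choose k) := by
        apply Finset.single_le_sum (f := fun k => a ^ k * (1 - (-1:ℝ) ^ (d - k)) * (d.choose k)) _ hmem
        intro k _
        have h1 : (-1:ℝ) ^ (d - k) ≤ 1 := by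
          rcases Nat.even_or_odd (d - k) with h | h
          · rw [h.neg_one_pow]
          · rw [h.neg_one_pow]; norm_num
        have h2 : (0:ℝ) ≤ a ^ k := pow_nonneg (by linarith) _
        have h3 : (0:ℝ) ≤ (d.choose k : ℝ) := Nat.cast_nonneg _
        have := mul_nonneg (mul_nonneg h2 (by linarith : (0:ℝ) ≤ 1 - (-1:ℝ)^(d-k))) h3
        simpa using this

lemma stmt3_lemB (d : ℕ) (hd : 1 ≤ d) (b : ℝ) (hb : 1 ≤ b) :
    (b + 2) ^ d - b ^ d ≤ ((3:ℝ) ^ d - 1) * b ^ (d - 1) := by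
  have h1 : (b + 2) ^ d = ∑ k ∈ Finset.range (d+1), b ^ k * 2 ^ (d - k) * (d.choose k) :=
    add_pow b 2 d
  have h3 : (3:ℝ) ^ d = ∑ k ∈ Finset.range (d+1), (2:ℝ) ^ (d - k) * (d.choose k) := by
    have : (3:ℝ) = 1 + 2 := by norm_num
    rw [this, add_pow]
    apply Finset.sum_congr rfl
    intro k _
    ring
  rw [Finset.sum_range_succ] at h1 h3
  simp only [Nat.sub_self, pow_zero, Nat.choose_self, Nat.cast_one, mul_one, one_mul] at h1 h3
  have hb0 : (0:ℝ) ≤ b := by linarith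
  have key : ∑ k ∈ Finset.range d, b ^ k * 2 ^ (d - k) * (d.choose k)
      ≤ (∑ k ∈ Finset.range d, (2:ℝ) ^ (d - k) * (d.choose k)) * b ^ (d-1) := by
    rw [Finset.sum_mul]
    apply Finset.sum_le_sum
    intro k hk
    have hk' : k ≤ d - 1 := by have := Finset.mem_range.mp hk; omega
    have : b ^ k ≤ b ^ (d-1) := pow_le_pow_right₀ hb hk'
    have h2 : (0:ℝ) ≤ (2:ℝ) ^ (d-k) * (d.choose k) := by positivity
    nlinarith
  have e1 : (b+2)^d - b^d = ∑ k ∈ Finset.range d, b ^ k * 2 ^ (d - k) * (d.choose k) := by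
    rw [h1]; ring
  have e3 : (3:ℝ)^d - 1 = ∑ k ∈ Finset.range d, (2:ℝ) ^ (d - k) * (d.choose k) := by
    rw [h3]; ring
  rw [e1, e3]
  exact key

noncomputable def stmt3box (d n : ℕ) : Finset (Fin d → ℤ) :=
  Finset.Icc (fun _ => -(n:ℤ)) (fun _ => (n:ℤ))

lemma stmt3_mem_box {d n : ℕ} {k : Fin d → ℤ} :
    k ∈ stmt3box d n ↔ ∀ i, (k i).natAbs ≤ n := by
  simp only [stmt3box, Finset.mem_Icc, Pi.le_def]
  constructor
  · rintro ⟨h1, h2⟩ i; have := h1 i; have := h2 i; omega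
  · intro h; constructor <;> intro i <;> have := h i <;> omega

lemma stmt3_card_box (d n : ℕ) : (stmt3box d n).card = (2*n+1)^d := by
  simp only [stmt3box, Pi.card_Icc, Int.card_Icc]
  have : ((n:ℤ) + 1 + (n:ℤ)).toNat = 2*n+1 := by omega
  simp [this]

lemma stmt3_lemC (d : ℕ) (hd : 1 ≤ d) (κ : ℝ → ℝ)
    (hdec : ∀ r s : ℝ, 0 ≤ r → r ≤ s → |κ s| ≤ |κ r|)
    (hgint : IntegrableOn (fun r : ℝ => r ^ (d-1) * |κ r|) (Set.Ioi 0))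
    (c : ℝ) (hc : 0 < c) (n : ℕ) (hn : 1 ≤ n) :
    (2*(n:ℝ) - 1)^(d-1) * |κ ((n:ℝ)*c)|
      ≤ 2^(d-1) * (c⁻¹)^d * ∫ r in Set.Ioc (((n:ℝ)-1)*c) ((n:ℝ)*c), r^(d-1) * |κ r| := by
  have hn1 : (1:ℝ) ≤ (n:ℝ) := by exact_mod_cast hn
  have hle : ((n:ℝ)-1)*c ≤ (n:ℝ)*c := by nlinarith
  have h0le : (0:ℝ) ≤ ((n:ℝ)-1)*c := by nlinarith
  set I := Set.Ioc (((n:ℝ)-1)*c) ((n:ℝ)*c) with hI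
  have hpt : ∀ r ∈ I, r^(d-1) * |κ ((n:ℝ)*c)| ≤ r^(d-1) * |κ r| := by
    intro r hr
    obtain ⟨hr1, hr2⟩ := hr
    have hr0 : 0 ≤ r := by linarith
    exact mul_le_mul_of_nonneg_left (hdec r ((n:ℝ)*c) hr0 hr2) (pow_nonneg hr0 _)
  have hint1 : IntegrableOn (fun r : ℝ => r^(d-1) * |κ ((n:ℝ)*c)|) I :=
    (Continuous.mul (continuous_pow _) continuous_const).integrableOn_Ioc
  have hint2 : IntegrableOn (fun r : ℝ => r^(d-1) * |κ r|) I := by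
    apply hgint.mono_set
    intro r hr
    exact lt_of_le_of_lt h0le hr.1
  have h2 : ∫ r in I, r^(d-1) * |κ ((n:ℝ)*c)| ≤ ∫ r in I, r^(d-1) * |κ r| :=
    setIntegral_mono_on hint1 hint2 measurableSet_Ioc hpt
  have h3 : ∫ r in I, r^(d-1) * |κ ((n:ℝ)*c)|
      = (((n:ℝ)*c)^d - (((n:ℝ)-1)*c)^d)/d * |κ ((n:ℝ)*c)| := by
    rw [hI, ← intervalIntegral.integral_of_le hle, intervalIntegral.integral_mul_const,
      integral_pow]
    have hcast : ((d-1:ℕ):ℝ) + 1 = (d:ℝ) := by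
      rw [Nat.cast_sub hd]; push_cast; ring
    rw [hcast, Nat.sub_add_cancel hd]
  have hdpos : (0:ℝ) < d := by exact_mod_cast hd
  have key : (2*(n:ℝ) - 1)^(d-1) ≤ 2^(d-1) * (c⁻¹)^d * ((((n:ℝ)*c)^d - (((n:ℝ)-1)*c)^d)/d) := by
    have ha : (1:ℝ) ≤ 2*(n:ℝ) - 1 := by linarith
    have hA := stmt3_lemA d hd (2*(n:ℝ) - 1) ha
    have e1 : (2*(n:ℝ) - 1 + 1) = 2 * (n:ℝ) := by ring
    have e2 : (2*(n:ℝ) - 1 - 1) = 2 * ((n:ℝ) - 1) := by ring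
    rw [e1, e2, mul_pow, mul_pow] at hA
    have h2d : (2:ℝ)^d = 2 * 2^(d-1) := by
      rw [← pow_succ']
      congr 1
      omega
    have e3 : (((n:ℝ)*c)^d - (((n:ℝ)-1)*c)^d) = ((n:ℝ)^d - ((n:ℝ)-1)^d) * c^d := by
      rw [mul_pow, mul_pow]; ring
    rw [e3]
    rw [div_eq_mul_inv]
    have hgoal : 2^(d-1) * (c⁻¹)^d * (((n:ℝ)^d - ((n:ℝ)-1)^d) * c^d * (d:ℝ)⁻¹)
        = 2^(d-1) * ((n:ℝ)^d - ((n:ℝ)-1)^d) * (d:ℝ)⁻¹ := by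
      have hc' : c ^ d * (c⁻¹)^d = 1 := by rw [← mul_pow, mul_inv_cancel₀ hc.ne', one_pow]
      linear_combination (2^(d-1) * ((n:ℝ)^d - ((n:ℝ)-1)^d) * (d:ℝ)⁻¹) * hc'
    rw [hgoal]
    rw [h2d] at hA
    have h4 : (d:ℝ) * (2*(n:ℝ)-1)^(d-1) ≤ 2^(d-1) * ((n:ℝ)^d - ((n:ℝ)-1)^d) := by nlinarith
    rw [← div_eq_mul_inv, le_div_iff₀ hdpos]
    linarith
  have hknn : (0:ℝ) ≤ |κ ((n:ℝ)*c)| := abs_nonneg _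
  calc (2*(n:ℝ) - 1)^(d-1) * |κ ((n:ℝ)*c)|
      ≤ (2^(d-1) * (c⁻¹)^d * ((((n:ℝ)*c)^d - (((n:ℝ)-1)*c)^d)/d)) * |κ ((n:ℝ)*c)| :=
        mul_le_mul_of_nonneg_right key hknn
    _ = 2^(d-1) * (c⁻¹)^d * (∫ r in I, r^(d-1) * |κ ((n:ℝ)*c)|) := by rw [h3]; ring
    _ ≤ 2^(d-1) * (c⁻¹)^d * ∫ r in I, r^(d-1) * |κ r| := by
        apply mul_le_mul_of_nonneg_left h2
        positivity

set_option maxHeartbeats 1000000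

theorem stmt3 (d : ℕ) (hd : 1 ≤ d) (κ : ℝ → ℝ)
    (hdec : ∀ r s : ℝ, 0 ≤ r → r ≤ s → |κ s| ≤ |κ r|)
    (hint : IntegrableOn (fun r : ℝ => r ^ (d - 1) * κ r) (Set.Ioi 0))
    (h0 lam : ℝ) (h0pos : 0 < h0) (lampos : 0 < lam) (m : ℕ) (hm : 1 ≤ m) :
    ∑' k : {k : Fin d → ℤ // m ≤ Finset.univ.sup fun i => (k i).natAbs},
        |κ (h0 * Real.sqrt (∑ i, ((k.1 i : ℝ)) ^ 2) / lam)|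
      ≤ ((3 : ℝ) ^ d - 1) * 2 ^ (d - 1) * (lam / h0) ^ d *
        ∫ r in Set.Ioi (((m : ℝ) - 1) * h0 / lam), r ^ (d - 1) * |κ r| := by
  classical
  set c : ℝ := h0 / lam with hcdef
  have hc : 0 < c := div_pos h0pos lampos
  have hinv : lam / h0 = c⁻¹ := by rw [hcdef, inv_div]
  have hgint : IntegrableOn (fun r : ℝ => r ^ (d-1) * |κ r|) (Set.Ioi 0) := by
    have habs : IntegrableOn (fun r : ℝ => |r ^ (d-1) * κ r|) (Set.Ioi 0) := hint.abs
    apply habs.congr_fun ?_ measurableSet_Ioi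
    intro r hr
    show |r ^ (d-1) * κ r| = r^(d-1) * |κ r|
    rw [abs_mul, abs_pow, abs_of_nonneg (le_of_lt (Set.mem_Ioi.mp hr))]
  set f : (Fin d → ℤ) → ℝ := fun k => |κ (h0 * Real.sqrt (∑ i, ((k i : ℝ))^2) / lam)| with hf
  have hfnn : ∀ k, 0 ≤ f k := fun k => abs_nonneg _
  set K : ℝ := ((3:ℝ)^d - 1) * 2^(d-1) * (lam/h0)^d with hK
  have h3d : (1:ℝ) ≤ 3^d := one_le_pow₀ (by norm_num)
  have hKnn : 0 ≤ K := by
    apply mul_nonneg (mul_nonneg (by linarith) (by positivity)) (by positivity)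
  have hm1 : (1:ℝ) ≤ (m:ℝ) := by exact_mod_cast hm
  have hpt : ((m:ℝ) - 1) * h0 / lam = ((m:ℝ)-1) * c := by rw [hcdef, mul_div_assoc]
  have hmc0 : (0:ℝ) ≤ ((m:ℝ)-1) * c := by nlinarith
  have hIoiInt : IntegrableOn (fun r : ℝ => r ^ (d-1) * |κ r|) (Set.Ioi (((m:ℝ)-1)*c)) := by
    apply hgint.mono_set
    intro r hr
    exact lt_of_le_of_lt hmc0 hr
  have hIoiNN : 0 ≤ ∫ r in Set.Ioi (((m:ℝ)-1)*c), r^(d-1)*|κ r| := by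
    apply setIntegral_nonneg measurableSet_Ioi
    intro r hr
    have h0r : 0 ≤ r := le_of_lt (lt_of_le_of_lt hmc0 hr)
    positivity
  rw [hpt]
  have hcastm : ((m-1:ℕ):ℝ) = (m:ℝ) - 1 := by
    rw [Nat.cast_sub hm]; push_cast; ring
  -- shell bound
  have shell : ∀ n : ℕ, m ≤ n →
      (∑ k ∈ stmt3box d n, f k) - (∑ k ∈ stmt3box d (n-1), f k)
        ≤ K * ∫ r in Set.Ioc (((n:ℝ)-1)*c) ((n:ℝ)*c), r^(d-1) * |κ r| := by
    intro n hn
    have hn1 : 1 ≤ n := le_trans hm hn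
    have hsub : stmt3box d (n-1) ⊆ stmt3box d n := by
      intro k hk
      rw [stmt3_mem_box] at *
      intro i
      exact le_trans (hk i) (by omega)
    have hdiffsum : (∑ k ∈ stmt3box d n, f k) - (∑ k ∈ stmt3box d (n-1), f k)
        = ∑ k ∈ stmt3box d n \ stmt3box d (n-1), f k := by
      rw [← Finset.sum_sdiff hsub]; ring
    have hbound : ∀ k ∈ stmt3box d n \ stmt3box d (n-1), f k ≤ |κ ((n:ℝ)*c)| := by
      intro k hk
      rw [Finset.mem_sdiff, stmt3_mem_box, stmt3_mem_box] at hk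
      obtain ⟨h1, h2⟩ := hk
      push_neg at h2
      obtain ⟨i, hi⟩ := h2
      have hni : n ≤ (k i).natAbs := by omega
      have hsq : ((n:ℝ))^2 ≤ ∑ j, ((k j : ℝ))^2 := by
        have habs : ((n:ℝ)) ≤ |((k i : ℝ))| := by
          rw [← Int.cast_abs]
          have : (n:ℤ) ≤ |k i| := by
            rw [Int.abs_eq_natAbs]; exact_mod_cast hni
          exact_mod_cast this
        have h1' : ((n:ℝ))^2 ≤ ((k i : ℝ))^2 := by
          have := sq_abs ((k i : ℝ))
          nlinarith [abs_nonneg ((k i : ℝ)), Nat.cast_nonneg (α := ℝ) n]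
        calc ((n:ℝ))^2 ≤ ((k i:ℝ))^2 := h1'
          _ ≤ ∑ j, ((k j:ℝ))^2 := Finset.single_le_sum (f := fun j => ((k j:ℝ))^2) (fun j _ => sq_nonneg _) (Finset.mem_univ i)
      have hsqrt : (n:ℝ) ≤ Real.sqrt (∑ j, ((k j:ℝ))^2) := by
        rw [show (n:ℝ) = Real.sqrt ((n:ℝ)^2) from (Real.sqrt_sq (Nat.cast_nonneg n)).symm]
        exact Real.sqrt_le_sqrt hsq
      have harg : (n:ℝ)*c ≤ h0 * Real.sqrt (∑ j, ((k j:ℝ))^2) / lam := by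
        rw [hcdef, div_eq_mul_inv, div_eq_mul_inv, mul_comm h0 lam⁻¹]
        have hl : (0:ℝ) < lam⁻¹ := inv_pos.mpr lampos
        nlinarith [mul_le_mul_of_nonneg_left hsqrt (le_of_lt h0pos)]
      have h0nc : 0 ≤ (n:ℝ)*c := by positivity
      exact hdec _ _ h0nc harg
    have hcardsum : ∑ k ∈ stmt3box d n \ stmt3box d (n-1), f k
        ≤ ((stmt3box d n \ stmt3box d (n-1)).card : ℝ) * |κ ((n:ℝ)*c)| := by
      have := Finset.sum_le_card_nsmul _ _ _ hbound
      simpa [nsmul_eq_mul] using this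
    have hcard : ((stmt3box d n \ stmt3box d (n-1)).card : ℝ)
        = (2*(n:ℝ)+1)^d - (2*(n:ℝ)-1)^d := by
      rw [Finset.card_sdiff_of_subset hsub, stmt3_card_box, stmt3_card_box]
      have hle : (2*(n-1)+1)^d ≤ (2*n+1)^d := Nat.pow_le_pow_left (by omega) _
      rw [Nat.cast_sub hle]
      push_cast [Nat.cast_sub hn1]
      ring
    have hbreal : (1:ℝ) ≤ 2*(n:ℝ)-1 := by
      have : (1:ℝ) ≤ (n:ℝ) := by exact_mod_cast hn1
      linarith
    have hB := stmt3_lemB d hd (2*(n:ℝ)-1) hbreal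
    have e2 : (2*(n:ℝ)-1+2) = 2*(n:ℝ)+1 := by ring
    rw [e2] at hB
    have hC := stmt3_lemC d hd κ hdec hgint c hc n hn1
    calc (∑ k ∈ stmt3box d n, f k) - (∑ k ∈ stmt3box d (n-1), f k)
        = ∑ k ∈ stmt3box d n \ stmt3box d (n-1), f k := hdiffsum
      _ ≤ ((stmt3box d n \ stmt3box d (n-1)).card : ℝ) * |κ ((n:ℝ)*c)| := hcardsum
      _ = ((2*(n:ℝ)+1)^d - (2*(n:ℝ)-1)^d) * |κ ((n:ℝ)*c)| := by rw [hcard]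
      _ ≤ (((3:ℝ)^d - 1) * (2*(n:ℝ)-1)^(d-1)) * |κ ((n:ℝ)*c)| :=
          mul_le_mul_of_nonneg_right hB (abs_nonneg _)
      _ = ((3:ℝ)^d - 1) * ((2*(n:ℝ)-1)^(d-1) * |κ ((n:ℝ)*c)|) := by ring
      _ ≤ ((3:ℝ)^d - 1) * (2^(d-1) * (c⁻¹)^d * ∫ r in Set.Ioc (((n:ℝ)-1)*c) ((n:ℝ)*c), r^(d-1) * |κ r|) :=
          mul_le_mul_of_nonneg_left hC (sub_nonneg.mpr h3d)
      _ = K * ∫ r in Set.Ioc (((n:ℝ)-1)*c) ((n:ℝ)*c), r^(d-1) * |κ r| := by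
          rw [hK, hinv]; ring
  -- master induction
  have master : ∀ N : ℕ, m - 1 ≤ N →
      (∑ k ∈ stmt3box d N, f k) - (∑ k ∈ stmt3box d (m-1), f k)
        ≤ K * ∫ r in Set.Ioc (((m:ℝ)-1)*c) ((N:ℝ)*c), r^(d-1) * |κ r| := by
    intro N hN
    induction N, hN using Nat.le_induction with
    | base =>
      rw [hcastm, Set.Ioc_self]
      simp
    | succ N hN ih =>
      have hmN : m ≤ N + 1 := by omega
      have hs := shell (N+1) hmN
      rw [Nat.add_sub_cancel] at hs
      push_cast at hs
      have hle1 : ((m:ℝ)-1)*c ≤ (N:ℝ)*c := by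
        have : (m:ℝ) - 1 ≤ (N:ℝ) := by
          rw [← hcastm]; exact_mod_cast hN
        nlinarith
      have hle2 : (N:ℝ)*c ≤ ((N:ℝ)+1)*c := by nlinarith
      have hintN : IntegrableOn (fun r : ℝ => r^(d-1) * |κ r|) (Set.Ioc (((m:ℝ)-1)*c) ((N:ℝ)*c)) := by
        apply hIoiInt.mono_set
        exact Set.Ioc_subset_Ioi_self
      have hintN1 : IntegrableOn (fun r : ℝ => r^(d-1) * |κ r|) (Set.Ioc ((N:ℝ)*c) (((N:ℝ)+1)*c)) := by
        apply hIoiInt.mono_set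
        intro r hr
        exact lt_of_le_of_lt hle1 hr.1
      have hadd : (∫ r in Set.Ioc (((m:ℝ)-1)*c) ((N:ℝ)*c), r^(d-1) * |κ r|)
          + (∫ r in Set.Ioc ((N:ℝ)*c) (((N:ℝ)+1)*c), r^(d-1) * |κ r|)
          = ∫ r in Set.Ioc (((m:ℝ)-1)*c) (((N:ℝ)+1)*c), r^(d-1) * |κ r| := by
        rw [← setIntegral_union (Set.Ioc_disjoint_Ioc_of_le le_rfl) measurableSet_Ioc hintN hintN1,
          Set.Ioc_union_Ioc_eq_Ioc hle1 hle2]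
      have hcastN : (((N+1:ℕ)):ℝ) = (N:ℝ) + 1 := by push_cast; ring
      rw [hcastN]
      have hmul : K * ((∫ r in Set.Ioc (((m:ℝ)-1)*c) ((N:ℝ)*c), r^(d-1) * |κ r|)
          + (∫ r in Set.Ioc ((N:ℝ)*c) (((N:ℝ)+1)*c), r^(d-1) * |κ r|))
          = K * ∫ r in Set.Ioc (((m:ℝ)-1)*c) (((N:ℝ)+1)*c), r^(d-1) * |κ r| := by
        rw [hadd]
      rw [← hmul, mul_add]
      have hsplit : (∑ k ∈ stmt3box d (N+1), f k) - (∑ k ∈ stmt3box d (m-1), f k)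
          = ((∑ k ∈ stmt3box d (N+1), f k) - (∑ k ∈ stmt3box d N, f k))
            + ((∑ k ∈ stmt3box d N, f k) - (∑ k ∈ stmt3box d (m-1), f k)) := by ring
      rw [hsplit]
      have hs' : (∑ k ∈ stmt3box d (N+1), f k) - (∑ k ∈ stmt3box d N, f k)
          ≤ K * ∫ r in Set.Ioc ((N:ℝ)*c) (((N:ℝ)+1)*c), r^(d-1) * |κ r| := by
        convert hs using 3
        ring
      linarith
  -- finish
  apply tsum_le_of_sum_le' (mul_nonneg hKnn hIoiNN)
  intro s
  set T := s.image Subtype.val with hT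
  have hsum : ∑ x ∈ s, f x.1 = ∑ k ∈ T, f k := by
    rw [hT, Finset.sum_image (fun x _ y _ h => Subtype.ext h)]
  obtain ⟨N, hNdef⟩ : ∃ N : ℕ, N = T.sup (fun k => Finset.univ.sup fun i => (k i).natAbs) + m :=
    ⟨_, rfl⟩
  have hmN : m ≤ N := by rw [hNdef]; exact Nat.le_add_left m _
  have hsupN : ∀ k ∈ T, (Finset.univ.sup fun i => (k i).natAbs) ≤ N := by
    intro k hk
    rw [hNdef]
    exact le_trans (Finset.le_sup (f := fun k => Finset.univ.sup fun i => (k i).natAbs) hk)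
      (Nat.le_add_right _ _)
  clear hNdef
  have hTsub : T ⊆ stmt3box d N \ stmt3box d (m-1) := by
    intro k hk
    rw [Finset.mem_sdiff, stmt3_mem_box, stmt3_mem_box]
    obtain ⟨x, hxs, rfl⟩ := Finset.mem_image.mp hk
    constructor
    · intro i
      have h1 : (x.1 i).natAbs ≤ Finset.univ.sup fun i => (x.1 i).natAbs :=
        Finset.le_sup (f := fun i => (x.1 i).natAbs) (Finset.mem_univ i)
      exact le_trans h1 (hsupN _ hk)
    · intro hall
      have hsle : (Finset.univ.sup fun i => (x.1 i).natAbs) ≤ m - 1 :=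
        Finset.sup_le (fun j _ => hall j)
      have hcon : m ≤ m - 1 := le_trans x.2 hsle
      exact absurd hcon (Nat.not_le.mpr (Nat.sub_lt (lt_of_lt_of_le Nat.one_pos hm) Nat.one_pos))
  have hNm : m - 1 ≤ N := le_trans (Nat.sub_le m 1) hmN
  have hM := master N hNm
  have hsub' : stmt3box d (m-1) ⊆ stmt3box d N := by
    intro k hk
    rw [stmt3_mem_box] at *
    intro i
    exact le_trans (hk i) (le_trans (Nat.sub_le m 1) hmN)
  have hstep : ∑ k ∈ T, f k ≤ (∑ k ∈ stmt3box d N, f k) - (∑ k ∈ stmt3box d (m-1), f k) := by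
    have h1 : ∑ k ∈ T, f k ≤ ∑ k ∈ stmt3box d N \ stmt3box d (m-1), f k :=
      Finset.sum_le_sum_of_subset_of_nonneg hTsub (fun k _ _ => hfnn k)
    have h2 := Finset.sum_sdiff (f := f) hsub'
    linarith
  have hIocIoi : (∫ r in Set.Ioc (((m:ℝ)-1)*c) ((N:ℝ)*c), r^(d-1) * |κ r|)
      ≤ ∫ r in Set.Ioi (((m:ℝ)-1)*c), r^(d-1) * |κ r| := by
    apply setIntegral_mono_set hIoiInt ?_ (HasSubset.Subset.eventuallyLE Set.Ioc_subset_Ioi_self)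
    filter_upwards [self_mem_ae_restrict measurableSet_Ioi] with r hr
    have h0r : 0 ≤ r := le_of_lt (lt_of_le_of_lt hmc0 hr)
    positivity
  have hfinal := mul_le_mul_of_nonneg_left hIocIoi hKnn
  calc ∑ x ∈ s, f x.1 = ∑ k ∈ T, f k := hsum
    _ ≤ (∑ k ∈ stmt3box d N, f k) - (∑ k ∈ stmt3box d (m-1), f k) := hstep
    _ ≤ K * ∫ r in Set.Ioc (((m:ℝ)-1)*c) ((N:ℝ)*c), r^(d-1) * |κ r| := hM
    _ ≤ K * ∫ r in Set.Ioi (((m:ℝ)-1)*c), r^(d-1) * |κ r| := hfinal
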